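/- Let G be a weighted digraph whose edge weights are among distinct values w_1 < w_2 < ... < w_m, and let G' be the graph with the same edges where edge e gets weight n^j if exactly j edge weights of G are ≤ w(e). Then for every vertex s and every edge e with j edges of weight at most w(e), the bottleneck ball {v : β_G(s,v) ≤ w(e)} equals the ordinary distance ball {v : d_{G'}(s,v) ≤ n^{j+1} − 1}, where n = |V| ≥ 2 and only simple paths are considered. -/

import Mathlib

open scoped Classical

/-- A simple path from `u` to `v` in the digraph with adjacency relation `A`. -/
def IsSPath {V : Type*} (A : V → V → Prop) (u v : V) (l : List V) : Prop :=
  l.Chain' A ∧ l.head? = some u ∧ l.getLast? = some v ∧ l.Nodup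

/-- The (ordinary, additive) weight of a path. -/
def pathWeight {V : Type*} (w : V → V → ℝ) (l : List V) : ℝ :=
  ((l.zip l.tail).map fun p => w p.1 p.2).sum

/-- The bottleneck length of a path: the maximum edge weight on it. -/
def pathBottleneck {V : Type*} (w : V → V → ℝ) (l : List V) : ℝ :=
  ((l.zip l.tail).map fun p => w p.1 p.2).foldr max 0

lemma chain'_zip_mem {V : Type*} {A : V → V → Prop} :
    ∀ {l : List V}, l.Chain' A → ∀ p ∈ l.zip l.tail, A p.1 p.2 := by
  intro l
  induction l with
  | nil => simp
  | cons a t ih =>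
    cases t with
    | nil => simp
    | cons b t' =>
      intro h p hp
      simp only [List.Chain', List.isChain_cons_cons] at h
      simp only [List.tail_cons, List.zip_cons_cons, List.mem_cons] at hp
      rcases hp with rfl | hp
      · exact h.1
      · exact ih h.2 p hp

lemma le_foldr_max' {l : List ℝ} {x : ℝ} (hx : x ∈ l) : x ≤ l.foldr max 0 := by
  induction l with
  | nil => simp at hx
  | cons a t ih =>
    rcases List.mem_cons.1 hx with rfl | h
    · exact le_max_left _ _
    · exact (ih h).trans (le_max_right _ _)

lemma foldr_max_le' {l : List ℝ} {c : ℝ} (hc : 0 ≤ c) (h : ∀ x ∈ l, x ≤ c) :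
    l.foldr max 0 ≤ c := by
  induction l with
  | nil => simpa
  | cons a t ih =>
    simp only [List.foldr_cons]
    exact max_le (h a (by simp)) (ih fun x hx => h x (List.mem_cons_of_mem _ hx))

/-- Reweighting a digraph `G = (V, E, w)` (with `n = |V| ≥ 2`) so that an edge `e'`
gets weight `n ^ j'` in `G'`, where `j'` is the number of edges of weight at most
`w(e')`: then for every vertex `s` and edge `e` with `j` edges of weight at most
`w(e)`, the bottleneck ball `{v : β_G(s,v) ≤ w(e)}` equals the ordinary distance
ball `{v : d_{G'}(s,v) ≤ n^(j+1) − 1}`, both taken over simple paths. -/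
theorem stmt_2 {V : Type*} [Fintype V] [DecidableEq V]
    (E : Finset (V × V)) (w : V → V → ℝ)
    (hw : ∀ p ∈ E, 0 ≤ w p.1 p.2)
    (hn : 2 ≤ Fintype.card V)
    (s : V) (e : V × V) (he : e ∈ E)
    (j : ℕ) (hj : j = (E.filter fun e' => w e'.1 e'.2 ≤ w e.1 e.2).card)
    (w' : V → V → ℝ)
    (hw' : ∀ e' ∈ E, w' e'.1 e'.2 =
      (Fintype.card V : ℝ) ^ (E.filter fun e'' => w e''.1 e''.2 ≤ w e'.1 e'.2).card) :
    {v | ∃ l, IsSPath (fun a b => (a, b) ∈ E) s v l ∧ pathBottleneck w l ≤ w e.1 e.2} =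
      {v | ∃ l, IsSPath (fun a b => (a, b) ∈ E) s v l ∧
        pathWeight w' l ≤ (Fintype.card V : ℝ) ^ (j + 1) - 1} := by
  have hn1 : (1 : ℝ) ≤ (Fintype.card V : ℝ) := by exact_mod_cast le_trans one_le_two hn
  ext v
  simp only [Set.mem_setOf_eq]
  constructor
  · rintro ⟨l, hl, hb⟩
    refine ⟨l, hl, ?_⟩
    have hE := chain'_zip_mem hl.1
    have hterm : ∀ x ∈ (l.zip l.tail).map (fun p => w' p.1 p.2),
        x ≤ (Fintype.card V : ℝ) ^ j := by
      intro x hx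
      obtain ⟨p, hp, rfl⟩ := List.mem_map.1 hx
      rw [hw' p (hE p hp), hj]
      apply pow_le_pow_right₀ hn1
      apply Finset.card_le_card
      intro q hq
      rw [Finset.mem_filter] at hq ⊢
      have hple : w p.1 p.2 ≤ w e.1 e.2 := by
        refine le_trans ?_ hb
        exact le_foldr_max' (List.mem_map.2 ⟨p, hp, rfl⟩)
      exact ⟨hq.1, le_trans hq.2 hple⟩
    have hsum := List.sum_le_card_nsmul _ _ hterm
    have hlen : ((l.zip l.tail).map (fun p => w' p.1 p.2)).length ≤ Fintype.card V - 1 := by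
      rw [List.length_map, List.length_zip, List.length_tail]
      have := List.Nodup.length_le_card hl.2.2.2
      omega
    have hpow1 : (1 : ℝ) ≤ (Fintype.card V : ℝ) ^ j := one_le_pow₀ hn1
    have hcast : ((Fintype.card V - 1 : ℕ) : ℝ) = (Fintype.card V : ℝ) - 1 := by
      have : 1 ≤ Fintype.card V := by omega
      push_cast [this]; ring
    calc pathWeight w' l ≤
        ((l.zip l.tail).map (fun p => w' p.1 p.2)).length • (Fintype.card V : ℝ) ^ j := hsum
      _ ≤ ((Fintype.card V - 1 : ℕ) : ℝ) * (Fintype.card V : ℝ) ^ j := by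
          rw [nsmul_eq_mul]
          apply mul_le_mul_of_nonneg_right _ (by positivity)
          exact_mod_cast hlen
      _ = (Fintype.card V : ℝ) ^ (j + 1) - (Fintype.card V : ℝ) ^ j := by
          rw [hcast]; ring
      _ ≤ (Fintype.card V : ℝ) ^ (j + 1) - 1 := by linarith
  · rintro ⟨l, hl, hwt⟩
    refine ⟨l, hl, ?_⟩
    have hE := chain'_zip_mem hl.1
    have key : ∀ p ∈ l.zip l.tail, w p.1 p.2 ≤ w e.1 e.2 := by
      intro p hp
      by_contra hgt
      push_neg at hgt
      have hsub' : (E.filter fun e'' => w e''.1 e''.2 ≤ w e.1 e.2) ⊆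
          (E.filter fun e'' => w e''.1 e''.2 ≤ w p.1 p.2) := by
        intro q hq
        rw [Finset.mem_filter] at hq ⊢
        exact ⟨hq.1, le_trans hq.2 hgt.le⟩
      have hss : (E.filter fun e'' => w e''.1 e''.2 ≤ w e.1 e.2) ⊂
          (E.filter fun e'' => w e''.1 e''.2 ≤ w p.1 p.2) := by
        refine (Finset.ssubset_iff_of_subset hsub').2 ⟨p, ?_, ?_⟩
        · exact Finset.mem_filter.2 ⟨hE p hp, le_refl _⟩
        · intro hc
          exact absurd (Finset.mem_filter.1 hc).2 (not_le.2 hgt)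
      have hcard : j + 1 ≤ (E.filter fun e'' => w e''.1 e''.2 ≤ w p.1 p.2).card := by
        rw [hj]; exact Finset.card_lt_card hss
      have h1 : (Fintype.card V : ℝ) ^ (j + 1) ≤ w' p.1 p.2 := by
        rw [hw' p (hE p hp)]
        exact pow_le_pow_right₀ hn1 hcard
      have h2 : w' p.1 p.2 ≤ pathWeight w' l := by
        apply List.single_le_sum
        · intro x hx
          obtain ⟨q, hq, rfl⟩ := List.mem_map.1 hx
          rw [hw' q (hE q hq)]
          positivity
        · exact List.mem_map.2 ⟨p, hp, rfl⟩
      linarith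
    apply foldr_max_le' (hw e he)
    intro x hx
    obtain ⟨p, hp, rfl⟩ := List.mem_map.1 hx
    exact key p hp
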